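/- Let δ = δ_0 + uδ_1 + ⋯ + u^{t−1}δ_{t−1} ∈ R^t be a unit such that x^n − δ_{0,0} is an irreducible polynomial over F. Then R^{t,n}_δ is a local ring whose unique maximal ideal is generated by u and x^n − δ_{0,0}; equivalently, an element of R^{t,n}_δ is a unit if and only if it does not belong to the ideal ⟨u, x^n − δ_{0,0}⟩. -/

import Mathlib

open Polynomial

/-- The finite chain ring `R^t = 𝔽_{p^m}[u]/⟨u^t⟩`. -/
abbrev Rt (p m t : ℕ) [Fact p.Prime] : Type _ :=
  Polynomial (GaloisField p m) ⧸ Ideal.span {(X : Polynomial (GaloisField p m)) ^ t}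

noncomputable instance (p m t : ℕ) [Fact p.Prime] : CommRing (Rt p m t) :=
  Ideal.Quotient.commRing _

/-- The canonical projection `𝔽_{p^m}[u] → R^t`. -/
noncomputable def mkRt (p m t : ℕ) [Fact p.Prime] :
    Polynomial (GaloisField p m) →+* Rt p m t :=
  Ideal.Quotient.mk _

/-- The element `u ∈ R^t`. -/
noncomputable def uRt (p m t : ℕ) [Fact p.Prime] : Rt p m t := mkRt p m t X

/-- The canonical embedding `𝔽_{p^m} → R^t`. -/
noncomputable def κ (p m t : ℕ) [Fact p.Prime] : GaloisField p m →+* Rt p m t :=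
  (mkRt p m t).comp (C : GaloisField p m →+* Polynomial (GaloisField p m))

/-- The quotient ring `R^t[x]/⟨x^N − δ⟩`. -/
abbrev Qr (p m t : ℕ) [Fact p.Prime] (N : ℕ) (δ : Rt p m t) : Type _ :=
  Polynomial (Rt p m t) ⧸ Ideal.span {(X : Polynomial (Rt p m t)) ^ N - C δ}

/-- The canonical projection `R^t[x] → R^t[x]/⟨x^N − δ⟩`. -/
noncomputable def mkQr (p m t : ℕ) [Fact p.Prime] (N : ℕ) (δ : Rt p m t) :
    Polynomial (Rt p m t) →+* Qr p m t N δ :=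
  Ideal.Quotient.mk _

noncomputable def epsRt (p m t : ℕ) [Fact p.Prime] (ht : 1 ≤ t) :
    Rt p m t →+* GaloisField p m :=
  Ideal.Quotient.lift _ (evalRingHom 0) (by
    intro a ha
    rw [Ideal.mem_span_singleton] at ha
    obtain ⟨b, rfl⟩ := ha
    simp [zero_pow (Nat.one_le_iff_ne_zero.mp ht)])

lemma epsRt_mk (p m t : ℕ) [Fact p.Prime] (ht : 1 ≤ t) (f : Polynomial (GaloisField p m)) :
    epsRt p m t ht (mkRt p m t f) = f.eval 0 :=
  rfl

lemma epsRt_kappa (p m t : ℕ) [Fact p.Prime] (ht : 1 ≤ t) (a : GaloisField p m) :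
    epsRt p m t ht (κ p m t a) = a := by
  show epsRt p m t ht (mkRt p m t (C a)) = a
  rw [epsRt_mk]; simp

lemma epsRt_u (p m t : ℕ) [Fact p.Prime] (ht : 1 ≤ t) :
    epsRt p m t ht (uRt p m t) = 0 := by
  show epsRt p m t ht (mkRt p m t X) = 0
  rw [epsRt_mk]; simp

lemma kappa_injective (p m t : ℕ) [Fact p.Prime] (ht : 1 ≤ t) :
    Function.Injective (κ p m t) :=
  Function.LeftInverse.injective (epsRt_kappa p m t ht)

lemma charP_Rt (p m t : ℕ) [Fact p.Prime] (ht : 1 ≤ t) : CharP (Rt p m t) p :=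
  charP_of_injective_ringHom (kappa_injective p m t ht) p

lemma uRt_pow (p m t : ℕ) [Fact p.Prime] : uRt p m t ^ t = 0 := by
  show mkRt p m t X ^ t = 0
  rw [← map_pow]
  exact Ideal.Quotient.eq_zero_iff_mem.mpr (Ideal.subset_span rfl)

lemma sub_kappa_eps (p m t : ℕ) [Fact p.Prime] (ht : 1 ≤ t) (r : Rt p m t) :
    ∃ w, r - κ p m t (epsRt p m t ht r) = uRt p m t * w := by
  obtain ⟨f, rfl⟩ := Ideal.Quotient.mk_surjective r
  rw [show (Ideal.Quotient.mk _ f : Rt p m t) = mkRt p m t f from rfl, epsRt_mk]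
  obtain ⟨g, hg⟩ : X ∣ f - C (f.eval 0) := by
    rw [X_dvd_iff]
    simp [coeff_zero_eq_eval_zero]
  refine ⟨mkRt p m t g, ?_⟩
  have h1 : κ p m t (f.eval 0) = mkRt p m t (C (f.eval 0)) := rfl
  rw [h1, ← map_sub, hg, map_mul]
  rfl

noncomputable def phiQr (p m t : ℕ) [Fact p.Prime] (ht : 1 ≤ t) (N : ℕ) (δ : Rt p m t)
    (g : Polynomial (GaloisField p m))
    (h : (X : Polynomial (GaloisField p m)) ^ N - C (epsRt p m t ht δ) ∈ Ideal.span {g}) :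
    Qr p m t N δ →+* Polynomial (GaloisField p m) ⧸ Ideal.span {g} :=
  Ideal.Quotient.lift _
    ((Ideal.Quotient.mk (Ideal.span {g})).comp (mapRingHom (epsRt p m t ht))) (by
      intro a ha
      rw [Ideal.mem_span_singleton] at ha
      obtain ⟨b, rfl⟩ := ha
      simp only [RingHom.comp_apply, coe_mapRingHom, Polynomial.map_mul, Polynomial.map_sub,
        Polynomial.map_pow, map_X, map_C]
      rw [Ideal.Quotient.eq_zero_iff_mem]
      exact Ideal.mul_mem_right _ _ h)

lemma phiQr_mk (p m t : ℕ) [Fact p.Prime] (ht : 1 ≤ t) (N : ℕ) (δ : Rt p m t)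
    (g : Polynomial (GaloisField p m))
    (h : (X : Polynomial (GaloisField p m)) ^ N - C (epsRt p m t ht δ) ∈ Ideal.span {g})
    (f : Polynomial (Rt p m t)) :
    phiQr p m t ht N δ g h (mkQr p m t N δ f) =
      Ideal.Quotient.mk (Ideal.span {g}) (f.map (epsRt p m t ht)) :=
  rfl

set_option maxHeartbeats 2000000 in
/-- Let `δ ∈ R^t` be a unit such that `xⁿ − δ_{0,0}` is irreducible over
`𝔽_{p^m}`.  Then `R^{t,n}_δ` is a local ring whose unique maximal ideal is generated by `u`
and `xⁿ − δ_{0,0}`; equivalently, an element of `R^{t,n}_δ` is a unit if and only if it does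
not belong to the ideal `⟨u, xⁿ − δ_{0,0}⟩`. -/
theorem stmt_13 (p m s t n : ℕ) [Fact p.Prime] (hm : m ≠ 0) (ht : 1 ≤ t)
    (hn : 0 < n) (hnp : ¬ p ∣ n)
    (δc : ℕ → GaloisField p m) (hδ0 : δc 0 ≠ 0)
    (δ00 : GaloisField p m) (hδ00 : δ00 ^ p ^ s = δc 0)
    (hirr : Irreducible ((X : Polynomial (GaloisField p m)) ^ n - C δ00)) :
    ∃ hloc : IsLocalRing (Qr p m t (n * p ^ s)
        (mkRt p m t (∑ i ∈ Finset.range t, C (δc i) * X ^ i))),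
      IsLocalRing.maximalIdeal (Qr p m t (n * p ^ s)
          (mkRt p m t (∑ i ∈ Finset.range t, C (δc i) * X ^ i))) =
        Ideal.span {mkQr p m t (n * p ^ s)
            (mkRt p m t (∑ i ∈ Finset.range t, C (δc i) * X ^ i))
            (C (uRt p m t)),
          mkQr p m t (n * p ^ s)
            (mkRt p m t (∑ i ∈ Finset.range t, C (δc i) * X ^ i))
            (X ^ n - C (κ p m t δ00))} ∧
      ∀ c : Qr p m t (n * p ^ s)
          (mkRt p m t (∑ i ∈ Finset.range t, C (δc i) * X ^ i)),
        IsUnit c ↔ c ∉ Ideal.span {mkQr p m t (n * p ^ s)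
            (mkRt p m t (∑ i ∈ Finset.range t, C (δc i) * X ^ i))
            (C (uRt p m t)),
          mkQr p m t (n * p ^ s)
            (mkRt p m t (∑ i ∈ Finset.range t, C (δc i) * X ^ i))
            (X ^ n - C (κ p m t δ00))} := by
    classical
  set δ : Rt p m t := mkRt p m t (∑ i ∈ Finset.range t, C (δc i) * X ^ i) with hδdef
  set N := n * p ^ s with hN
  set g1 := mkQr p m t N δ (C (uRt p m t)) with hg1
  set g2 := mkQr p m t N δ (X ^ n - C (κ p m t δ00)) with hg2
  set M : Ideal (Qr p m t N δ) := Ideal.span {g1, g2} with hM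
  haveI : CharP (Rt p m t) p := charP_Rt p m t ht
  -- ε δ = δc 0
  have hεδ : epsRt p m t ht δ = δc 0 := by
    rw [hδdef, epsRt_mk]
    rw [eval_finset_sum]
    rw [Finset.sum_eq_single 0]
    · simp
    · intro i hi hi0
      simp [zero_pow hi0]
    · intro h
      exact absurd (Finset.mem_range.mpr (by omega)) h
  -- key polynomial identity over F
  have hkey : ((X : Polynomial (GaloisField p m)) ^ n - C δ00) ^ p ^ s
      = X ^ N - C (epsRt p m t ht δ) := by
    rw [sub_pow_char_pow, ← pow_mul, ← map_pow, hδ00, hεδ, hN]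
  have hmem : (X : Polynomial (GaloisField p m)) ^ N - C (epsRt p m t ht δ) ∈
      Ideal.span {(X : Polynomial (GaloisField p m)) ^ n - C δ00} := by
    rw [← hkey]
    exact Ideal.mem_span_singleton.mpr (dvd_pow_self _ (pow_ne_zero s (Nat.Prime.ne_zero Fact.out)))
  set φ := phiQr p m t ht N δ (X ^ n - C δ00) hmem with hφ
  haveI hmax : (Ideal.span {(X : Polynomial (GaloisField p m)) ^ n - C δ00}).IsMaximal :=
    PrincipalIdealRing.isMaximal_of_irreducible hirr
  haveI : Nontrivial (Polynomial (GaloisField p m) ⧸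
      Ideal.span {(X : Polynomial (GaloisField p m)) ^ n - C δ00}) :=
    Ideal.Quotient.nontrivial_iff.mpr hmax.ne_top
  haveI : Nontrivial (Qr p m t N δ) := by
    refine ⟨1, 0, fun h => one_ne_zero (α := Polynomial (GaloisField p m) ⧸
      Ideal.span {(X : Polynomial (GaloisField p m)) ^ n - C δ00}) ?_⟩
    rw [← map_one φ, h, map_zero]
  -- generators nilpotent
  have hnil1 : IsNilpotent g1 := by
    refine ⟨t, ?_⟩
    rw [hg1, ← map_pow, ← C_pow, uRt_pow, C_0, map_zero]
  have hXNδ : mkQr p m t N δ (X ^ N - C δ) = 0 :=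
    Ideal.Quotient.eq_zero_iff_mem.mpr (Ideal.subset_span rfl)
  have hnil2 : IsNilpotent g2 := by
    obtain ⟨w, hw⟩ := sub_kappa_eps p m t ht δ
    rw [hεδ] at hw
    have hpoly : ((X : Polynomial (Rt p m t)) ^ n - C (κ p m t δ00)) ^ p ^ s
        = (X ^ N - C δ) + C (uRt p m t * w) := by
      rw [sub_pow_char_pow, ← pow_mul, ← C_pow, ← map_pow, hδ00, ← hw, hN, map_sub]
      ring
    have hstep : g2 ^ p ^ s = mkQr p m t N δ (C (uRt p m t * w)) := by
      rw [hg2, ← map_pow, hpoly, map_add, hXNδ, zero_add]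
    refine ⟨p ^ s * t, ?_⟩
    rw [pow_mul, hstep, ← map_pow, ← C_pow, mul_pow, uRt_pow, zero_mul, C_0, map_zero]
  have hMnil : ∀ c ∈ M, IsNilpotent c := by
    intro c hc
    have : M ≤ nilradical (Qr p m t N δ) := by
      rw [hM, Ideal.span_le]
      rintro x (rfl | rfl)
      · exact hnil1
      · exact hnil2
    exact this hc
  -- M ⊆ ker φ
  have hMker : ∀ c ∈ M, φ c = 0 := by
    intro c hc
    have : M ≤ RingHom.ker φ := by
      rw [hM, Ideal.span_le]
      rintro x (rfl | rfl) <;> rw [SetLike.mem_coe, RingHom.mem_ker]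
      · rw [hg1, hφ, phiQr_mk]
        simp [epsRt_u p m t ht]
      · rw [hg2, hφ, phiQr_mk]
        rw [Ideal.Quotient.eq_zero_iff_mem]
        have : (X ^ n - C (κ p m t δ00) : Polynomial (Rt p m t)).map (epsRt p m t ht)
            = X ^ n - C δ00 := by
          simp [epsRt_kappa p m t ht]
        rw [this]
        exact Ideal.subset_span rfl
    exact this hc
  -- ker φ ⊆ M
  have hkerM : ∀ c, φ c = 0 → c ∈ M := by
    intro c hc
    obtain ⟨f, rfl⟩ := Ideal.Quotient.mk_surjective c
    rw [show (Ideal.Quotient.mk _ f : Qr p m t N δ) = mkQr p m t N δ f from rfl] at *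
    rw [hφ, phiQr_mk, Ideal.Quotient.eq_zero_iff_mem, Ideal.mem_span_singleton] at hc
    obtain ⟨g, hg⟩ := hc
    obtain ⟨h, hh⟩ : C (uRt p m t) ∣ f - (f.map (epsRt p m t ht)).map (κ p m t) := by
      rw [C_dvd_iff_dvd_coeff]
      intro i
      rw [coeff_sub, coeff_map, coeff_map]
      obtain ⟨w, hw⟩ := sub_kappa_eps p m t ht (f.coeff i)
      exact ⟨w, hw⟩
    have hf : f = (X ^ n - C (κ p m t δ00)) * (g.map (κ p m t)) + C (uRt p m t) * h := by
      rw [← hh, hg]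
      rw [Polynomial.map_mul, Polynomial.map_sub, Polynomial.map_pow, map_X, map_C]
      ring
    rw [hf, map_add, map_mul, map_mul]
    refine Ideal.add_mem _ ?_ ?_
    · letI : CommRing (Qr p m t N δ) := Ideal.Quotient.commRing _; exact Ideal.mul_mem_right _ _ (Ideal.subset_span (Set.mem_insert_of_mem _ rfl))
    · letI : CommRing (Qr p m t N δ) := Ideal.Quotient.commRing _; exact Ideal.mul_mem_right _ _ (Ideal.subset_span (Set.mem_insert _ _))
  -- φ surjective
  have hφsurj : Function.Surjective φ := by
    intro y
    obtain ⟨g, rfl⟩ := Ideal.Quotient.mk_surjective y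
    obtain ⟨f, hf⟩ := Polynomial.map_surjective (epsRt p m t ht)
      (fun a => ⟨κ p m t a, epsRt_kappa p m t ht a⟩) g
    exact ⟨mkQr p m t N δ f, by rw [hφ, phiQr_mk, hf]⟩
  -- main characterization
  have hiff : ∀ c : Qr p m t N δ, IsUnit c ↔ c ∉ M := by
    intro c
    constructor
    · intro hc hcM
      obtain ⟨k, hk⟩ := hMnil c hcM
      have := hc.pow k
      rw [hk] at this
      letI hCR : CommRing (Qr p m t N δ) := Ideal.Quotient.commRing _; exact zero_ne_one (isUnit_zero_iff.mp this)
    · intro hc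
      have hφc : φ c ≠ 0 := fun h => hc (hkerM c h)
      obtain ⟨b, hb⟩ := Ideal.Quotient.exists_inv hφc
      obtain ⟨d, rfl⟩ := hφsurj b
      have : φ (c * d - 1) = 0 := by rw [map_sub, map_mul, hb, map_one, sub_self]
      have hnil := hMnil _ (hkerM _ this)
      have hcd : IsUnit (c * d) := by
        have := hnil.isUnit_add_one
        rwa [sub_add_cancel] at this
      letI : CommRing (Qr p m t N δ) := Ideal.Quotient.commRing _; exact isUnit_of_mul_isUnit_left hcd
  haveI hloc : IsLocalRing (Qr p m t N δ) :=
    IsLocalRing.of_isUnit_or_isUnit_one_sub_self (fun a => by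
      by_cases h : a ∈ M
      · exact Or.inr (hMnil a h).isUnit_one_sub
      · exact Or.inl ((hiff a).mpr h))
  refine ⟨hloc, ?_, hiff⟩
  ext c
  rw [IsLocalRing.mem_maximalIdeal, mem_nonunits_iff, hiff c, not_not]
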